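/- Let K be a field and A a division algebra over K such that every element of A is algebraic over K. Regard A as a left A-module over itself, and let J be a K-subspace of A with J ≠ 0 and J ≠ A. Then σ(J) = {0} and τ(J) = (A \ J) ∪ {0}. -/

import Mathlib

/-- `J` is a (two-sided) Mathieu subspace of the `K`-algebra `A`. -/
def IsMathieuSubspace {K A : Type*} [Field K] [Ring A] [Algebra K A]
    (J : Submodule K A) : Prop :=
  ∀ a : A, (∀ m : ℕ, 1 ≤ m → a ^ m ∈ J) →
    ∀ b c : A, ∃ N : ℕ, 1 ≤ N ∧ ∀ m : ℕ, N ≤ m → b * a ^ m * c ∈ J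

/-- A `K`-subspace `J` of `A` is a two-sided ideal of `A` if it absorbs
multiplication on both sides. -/
def IsTwoSidedIdealSubspace {K A : Type*} [Field K] [Ring A] [Algebra K A]
    (J : Submodule K A) : Prop :=
  ∀ a ∈ J, ∀ b : A, b * a ∈ J ∧ a * b ∈ J

variable {K A M : Type*} [Field K] [Ring A] [Algebra K A] [AddCommGroup M]
  [Module A M] [Module K M] [IsScalarTower K A M]

/-- For `u ∈ M` and a `K`-subspace `N` of `M`, the `K`-subspace
`(N : u) = {a ∈ A | a • u ∈ N}` of `A`. -/
def colonSub (N : Submodule K M) (u : M) : Submodule K A where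
  carrier := {a : A | a • u ∈ N}
  add_mem' := by
    intro a b ha hb
    simp only [Set.mem_setOf_eq, add_smul] at *
    exact N.add_mem ha hb
  zero_mem' := by
    simp only [Set.mem_setOf_eq, zero_smul]
    exact N.zero_mem
  smul_mem' := by
    intro r a ha
    simp only [Set.mem_setOf_eq] at *
    rw [smul_assoc]
    exact N.smul_mem r ha

/-- The set of stable elements of `N`. -/
def sigmaSet (N : Submodule K M) : Set M :=
  {u : M | IsTwoSidedIdealSubspace (colonSub (A := A) N u)}

/-- The set of quasi-stable elements of `N`. -/
def tauSet (N : Submodule K M) : Set M :=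
  {u : M | IsMathieuSubspace (colonSub (A := A) N u)}

lemma mem_colonSub {N : Submodule K M} {u : M} {a : A} :
    a ∈ colonSub N u ↔ a • u ∈ N := Iff.rfl

/-- In an algebraic division algebra, every nonzero element has a left inverse which
is a polynomial expression in it. -/
lemma exists_left_inv_aeval {K A : Type*} [Field K] [DivisionRing A] [Algebra K A]
    {a : A} (ha : a ≠ 0) (halg : IsAlgebraic K a) :
    ∃ f : Polynomial K, (Polynomial.aeval a f) * a = 1 := by
  obtain ⟨p, hp, hpa⟩ := halg
  suffices H : ∀ n : ℕ, ∀ p : Polynomial K, p.natDegree ≤ n → p ≠ 0 →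
      Polynomial.aeval a p = 0 → ∃ f : Polynomial K, (Polynomial.aeval a f) * a = 1 from
    H p.natDegree p le_rfl hp hpa
  intro n
  induction n with
  | zero =>
    intro p hdeg hp0 hpa
    exfalso
    rw [Polynomial.eq_C_of_natDegree_le_zero hdeg] at hpa hp0
    rw [Polynomial.aeval_C] at hpa
    exact hp0 (by simpa using (map_eq_zero (algebraMap K A)).mp hpa)
  | succ n ih =>
    intro p hdeg hp0 hpa
    by_cases hc : p.coeff 0 = 0
    · -- p = X * divX p, cancel one factor of a
      have hX : Polynomial.X * p.divX = p := by
        have := Polynomial.X_mul_divX_add (p := p)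
        rw [hc, map_zero, add_zero] at this
        exact this
      have hdx0 : p.divX ≠ 0 := by
        intro h
        apply hp0
        rw [← hX, h, mul_zero]
      have hdxa : Polynomial.aeval a p.divX = 0 := by
        have h2 := congrArg (Polynomial.aeval a) hX
        rw [map_mul, Polynomial.aeval_X, hpa] at h2
        rcases mul_eq_zero.mp h2 with h | h
        · exact absurd h ha
        · exact h
      exact ih p.divX (by
        have := Polynomial.natDegree_divX_eq_natDegree_tsub_one (p := p)
        omega) hdx0 hdxa
    · -- constant coefficient nonzero: solve for 1
      set c := p.coeff 0 with hcdef
      have hX : Polynomial.X * p.divX + Polynomial.C c = p := Polynomial.X_mul_divX_add p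
      have h0 : Polynomial.aeval a p.divX * a + algebraMap K A c = 0 := by
        have h2 := congrArg (Polynomial.aeval a) hX
        rw [mul_comm Polynomial.X, map_add, map_mul, Polynomial.aeval_X,
          Polynomial.aeval_C, hpa] at h2
        exact h2
      refine ⟨-(Polynomial.C c⁻¹ * p.divX), ?_⟩
      have hcA : algebraMap K A c ≠ 0 := by
        simpa using hc
      have : Polynomial.aeval a p.divX * a = -algebraMap K A c :=
        eq_neg_of_add_eq_zero_left h0
      rw [map_neg, map_mul, Polynomial.aeval_C, neg_mul, mul_assoc, this]
      rw [map_inv₀, mul_neg, neg_neg, inv_mul_cancel₀ hcA]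

/-- If all powers `a^m * u` (m ≥ 1) lie in `J` for a nonzero `a`, then `u ∈ J`. -/
lemma mem_of_pow_mul_mem {K A : Type*} [Field K] [DivisionRing A] [Algebra K A]
    (halg : ∀ a : A, IsAlgebraic K a) (J : Submodule K A) {a u : A} (ha : a ≠ 0)
    (h : ∀ m : ℕ, 1 ≤ m → a ^ m * u ∈ J) : u ∈ J := by
  obtain ⟨f, hf⟩ := exists_left_inv_aeval ha (halg a)
  have hu : u = Polynomial.aeval a f * (a * u) := by
    rw [← mul_assoc, hf, one_mul]
  rw [hu, Polynomial.aeval_eq_sum_range, Finset.sum_mul]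
  apply Submodule.sum_mem
  intro i _
  rw [smul_mul_assoc, ← mul_assoc, ← pow_succ]
  exact J.smul_mem _ (h (i + 1) (Nat.le_add_left 1 i))

theorem stmt15 {K A : Type*} [Field K] [DivisionRing A] [Algebra K A]
    (halg : ∀ a : A, IsAlgebraic K a)
    (J : Submodule K A) (hJ0 : J ≠ ⊥) (hJtop : J ≠ ⊤) :
    sigmaSet (A := A) (M := A) J = {0} ∧
    tauSet (A := A) (M := A) J = (J : Set A)ᶜ ∪ {0} := by
  obtain ⟨w, hw⟩ : ∃ w : A, w ∉ J := by
    by_contra h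
    push_neg at h
    exact hJtop (Submodule.eq_top_iff'.mpr h)
  obtain ⟨j, hjJ, hj0⟩ : ∃ j ∈ J, j ≠ (0 : A) := Submodule.exists_mem_ne_zero_of_ne_bot hJ0
  constructor
  · ext u
    simp only [Set.mem_singleton_iff]
    constructor
    · intro hu
      by_contra hu0
      have hI : IsTwoSidedIdealSubspace (colonSub (A := A) J u) := hu
      set s : A := j * u⁻¹ with hs
      have hsS : s ∈ colonSub (A := A) J u := by
        rw [mem_colonSub, smul_eq_mul, hs, mul_assoc, inv_mul_cancel₀ hu0, mul_one]
        exact hjJ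
      have hs0 : s ≠ 0 := by
        simp [hs, hj0, hu0]
      apply hw
      have := (hI s hsS (w * u⁻¹ * s⁻¹)).1
      rw [mem_colonSub, smul_eq_mul] at this
      rwa [mul_assoc (w * u⁻¹), inv_mul_cancel₀ hs0, mul_one,
        mul_assoc, inv_mul_cancel₀ hu0, mul_one] at this
    · rintro rfl
      intro a _ b
      constructor <;> (rw [mem_colonSub, smul_zero]; exact J.zero_mem)
  · ext u
    simp only [Set.mem_union, Set.mem_compl_iff, SetLike.mem_coe, Set.mem_singleton_iff]
    constructor
    · intro hu
      by_contra h
      push_neg at h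
      obtain ⟨huJ, hu0⟩ := h
      have hpow : ∀ m : ℕ, 1 ≤ m → (1 : A) ^ m ∈ colonSub (A := A) J u := by
        intro m _
        rw [mem_colonSub, one_pow, one_smul]
        exact huJ
      obtain ⟨N, hN1, hN⟩ := hu 1 hpow (w * u⁻¹) 1
      have := hN N le_rfl
      rw [mem_colonSub, one_pow, mul_one, mul_one, smul_eq_mul, mul_assoc,
        inv_mul_cancel₀ hu0, mul_one] at this
      exact hw this
    · rintro (huJ | rfl)
      · intro a hpow b c
        by_cases ha : a = 0
        · refine ⟨1, le_rfl, fun m hm => ?_⟩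
          rw [mem_colonSub, ha, zero_pow (by omega : m ≠ 0), mul_zero, zero_mul, zero_smul]
          exact J.zero_mem
        · exact absurd (mem_of_pow_mul_mem halg J ha fun m hm => by
            simpa [mem_colonSub, smul_eq_mul] using hpow m hm) huJ
      · intro a _ b c
        refine ⟨1, le_rfl, fun m _ => ?_⟩
        rw [mem_colonSub, smul_zero]
        exact J.zero_mem
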